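/- Let m ≥ 1 and (M, g) a compact Riemannian manifold with boundary. If the mixing ray transform I_A is solenoidally injective for some mixing A of degree m, then I_Ã is solenoidally injective for every mixing Ã of degree m. -/

import Mathlib

open Manifold MeasureTheory

noncomputable section

/-- Covariant `m`-tensors on the (trivialised) tangent space `E`. -/
abbrev Tens (E : Type*) [NormedAddCommGroup E] [NormedSpace ℝ E] (m : ℕ) :=
  ContinuousMultilinearMap ℝ (fun _ : Fin m => E) ℝ

variable {E : Type*} [NormedAddCommGroup E] [NormedSpace ℝ E]

/-- Symmetrisation of an `m`-tensor. -/
noncomputable def symmTens {m : ℕ} (h : Tens E m) : Tens E m :=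
  ((m.factorial : ℝ)⁻¹) • ∑ π : Equiv.Perm (Fin m), h.domDomCongr π

/-- A tensor is symmetric if it is invariant under permutations of its arguments. -/
def IsSymmTens {m : ℕ} (h : Tens E m) : Prop :=
  ∀ π : Equiv.Perm (Fin m), h.domDomCongr π = h

variable {H : Type*} [TopologicalSpace H] {I : ModelWithCorners ℝ E H}
  {M : Type*} [TopologicalSpace M] [ChartedSpace H M]

/-- Application of a mixing `A = (A₁,…,A_m)` (a smooth family of fibrewise linear
bijections of the tangent spaces) to an `m`-tensor field:
`(Ah)ₓ(ξ₁,…,ξ_m) = hₓ(A₁(x)ξ₁,…,A_m(x)ξ_m)`. -/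
noncomputable def applyMixing {m : ℕ} (A : Fin m → M → (E ≃L[ℝ] E))
    (h : M → Tens E m) : M → Tens E m :=
  fun x => (h x).compContinuousLinearMap fun i => ((A i x : E →L[ℝ] E))

/-- The inverse mixing `A⁻¹`. -/
noncomputable def invMixing {m : ℕ} (A : Fin m → M → (E ≃L[ℝ] E)) :
    Fin m → M → (E ≃L[ℝ] E) :=
  fun i x => (A i x).symm

/-- The generalised symmetrisation `σ̂_A = A⁻¹ ∘ σ ∘ A`. -/
noncomputable def sigmaHat {m : ℕ} (A : Fin m → M → (E ≃L[ℝ] E))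
    (h : M → Tens E m) : M → Tens E m :=
  applyMixing (invMixing A) (fun x => symmTens (applyMixing A h x))

/-- A mixing is smooth if each family of linear bijections is smooth. -/
def SmoothMixing {m : ℕ} (I : ModelWithCorners ℝ E H) (M : Type*) [TopologicalSpace M]
    [ChartedSpace H M] (A : Fin m → M → (E ≃L[ℝ] E)) : Prop :=
  ∀ i : Fin m, ContMDiff I 𝓘(ℝ, E →L[ℝ] E) (⊤ : ℕ∞) (fun x : M => ((A i x : E →L[ℝ] E)))

/-- A family of curves in `M` (in applications: the maximal geodesics of a Riemannian
metric `g`, parametrised on `[0, T γ]`). -/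
structure CurveFamily (I : ModelWithCorners ℝ E H) (M : Type*) [TopologicalSpace M]
    [ChartedSpace H M] where
  Geo : Type
  curve : Geo → ℝ → M
  time : Geo → ℝ

/-- The (geodesic) ray transform of an `m`-tensor field along the curve family:
`I_m h (γ) = ∫₀^{T γ} h_{γ(t)}(γ̇(t),…,γ̇(t)) dt`. -/
noncomputable def rayTransform {m : ℕ} (Γ : CurveFamily I M) (h : M → Tens E m)
    (γ : Γ.Geo) : ℝ :=
  ∫ t in (0 : ℝ)..(Γ.time γ),
    (h (Γ.curve γ t)) (fun _ => (mfderiv 𝓘(ℝ, ℝ) I (Γ.curve γ) t (1 : ℝ) : E))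

/-- Smooth tensor fields. -/
def SmoothTensField (I : ModelWithCorners ℝ E H) {M : Type*} [TopologicalSpace M]
    [ChartedSpace H M] {m : ℕ} (h : M → Tens E m) : Prop :=
  ContMDiff I 𝓘(ℝ, Tens E m) (⊤ : ℕ∞) h

/-!
STATEMENT 14: Let `m ≥ 1` and `(M,g)` a compact Riemannian manifold with boundary.
If the mixing ray transform `I_A = I_m ∘ A` is solenoidally injective for some
mixing `A` of degree `m`, then `I_Ã` is solenoidally injective for every mixing `Ã`
of degree `m`.

The geodesics of `g` are abstracted as a curve family `Γ` and the covariant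
derivative of `g` (its symmetrised version acts on symmetric tensors) as an
operator `nabla` from `(m-1)`-tensor fields to `m`-tensor fields; `I_A` is
solenoidally injective if for every smooth `m`-tensor field `h`: `I_A h = 0` iff
`σ̂_A h = σ̂_A ∇^A v` for some smooth symmetric `(m-1)`-tensor field `v` vanishing
on the boundary `∂M`, where `σ̂_A = A⁻¹ ∘ σ ∘ A` and `∇^A = A⁻¹ ∘ ∇`.
-/

/-- Solenoidal injectivity of the mixing ray transform `I_A = I_m ∘ A`. -/
def SInjectiveMixing {E : Type*} [NormedAddCommGroup E] [NormedSpace ℝ E]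
    {H : Type*} [TopologicalSpace H] (I : ModelWithCorners ℝ E H)
    (M : Type*) [TopologicalSpace M] [ChartedSpace H M]
    {m : ℕ} (Γ : CurveFamily I M)
    (nabla : (M → Tens E (m - 1)) → (M → Tens E m))
    (A : Fin m → M → (E ≃L[ℝ] E)) : Prop :=
  ∀ h : M → Tens E m, SmoothTensField I h →
    ((∀ γ : Γ.Geo, rayTransform Γ (applyMixing A h) γ = 0) ↔
      ∃ v : M → Tens E (m - 1), SmoothTensField I v ∧ (∀ x, IsSymmTens (v x)) ∧
        (∀ x ∈ I.boundary M, v x = 0) ∧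
        sigmaHat A h = sigmaHat A (applyMixing (invMixing A) (nabla v)))

/-! ### Auxiliary lemmas -/

section AuxInverse

open Filter Asymptotics Topology Set

/-- Algebraic identity for differences of pointwise inverses. -/
private lemma aux_inv_sub_inv {R : Type*} [NormedRing R] {p q P Q : R}
    (hP : P * p = 1) (hQ : q * Q = 1) : P - Q = P * (q - p) * Q := by
  have h : P * (q * Q) - P * p * Q = P * (q - p) * Q := by
    rw [← mul_assoc, ← sub_mul, ← mul_sub]
  rw [← h, hP, hQ, mul_one, one_mul]

/-- Continuity of pointwise inverses in a normed ring. -/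
lemma aux_continuousOn_inverse {X : Type*} [TopologicalSpace X] {R : Type*} [NormedRing R]
    {f g : X → R} {s : Set X} (hf : ContinuousOn f s)
    (h1 : ∀ y ∈ s, g y * f y = 1) (h2 : ∀ y ∈ s, f y * g y = 1) :
    ContinuousOn g s := by
  intro x₀ hx₀
  have key : ∀ y ∈ s, g y - g x₀ = g y * (f x₀ - f y) * g x₀ := fun y hy =>
    aux_inv_sub_inv (h1 y hy) (h2 x₀ hx₀)
  set d : ℝ := (2 * (‖g x₀‖ + 1))⁻¹ with hd_def
  have hd_pos : 0 < d := by positivity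
  have hfc : Tendsto (fun y => ‖f y - f x₀‖) (𝓝[s] x₀) (𝓝 0) := by
    have h : Tendsto f (𝓝[s] x₀) (𝓝 (f x₀)) := hf x₀ hx₀
    simpa using (h.sub_const (f x₀)).norm
  have hev : ∀ᶠ y in 𝓝[s] x₀, ‖f y - f x₀‖ < d := hfc.eventually_lt_const hd_pos
  have h2d : 2 * (‖g x₀‖ + 1) * d = 1 := mul_inv_cancel₀ (by positivity)
  have hCd : ‖g x₀‖ * d ≤ 1 / 2 := by nlinarith [hd_pos.le]
  have hfinal : ∀ᶠ y in 𝓝[s] x₀,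
      ‖g y - g x₀‖ ≤ 2 * ‖g x₀‖ * ‖g x₀‖ * ‖f y - f x₀‖ := by
    filter_upwards [hev, self_mem_nhdsWithin] with y hy hys
    have hid := key y hys
    have hnorm : ‖g y - g x₀‖ ≤ ‖g y‖ * ‖f x₀ - f y‖ * ‖g x₀‖ := by
      calc ‖g y - g x₀‖ = ‖g y * (f x₀ - f y) * g x₀‖ := by rw [hid]
        _ ≤ ‖g y * (f x₀ - f y)‖ * ‖g x₀‖ := norm_mul_le _ _
        _ ≤ ‖g y‖ * ‖f x₀ - f y‖ * ‖g x₀‖ := by gcongr; exact norm_mul_le _ _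
    have hfy : ‖f x₀ - f y‖ ≤ d := by rw [norm_sub_rev]; exact hy.le
    have e1 : ‖g y‖ * ‖f x₀ - f y‖ * ‖g x₀‖ ≤ ‖g y‖ * (1 / 2) := by
      calc ‖g y‖ * ‖f x₀ - f y‖ * ‖g x₀‖ = ‖g y‖ * (‖f x₀ - f y‖ * ‖g x₀‖) := by ring
        _ ≤ ‖g y‖ * (d * ‖g x₀‖) := by gcongr
        _ = ‖g y‖ * (‖g x₀‖ * d) := by ring
        _ ≤ ‖g y‖ * (1 / 2) := by gcongr
    have hX : ‖g y‖ ≤ 2 * ‖g x₀‖ := by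
      have := norm_sub_norm_le (g y) (g x₀)
      linarith
    calc ‖g y - g x₀‖ ≤ ‖g y‖ * ‖f x₀ - f y‖ * ‖g x₀‖ := hnorm
      _ ≤ 2 * ‖g x₀‖ * ‖f x₀ - f y‖ * ‖g x₀‖ := by gcongr
      _ = 2 * ‖g x₀‖ * ‖g x₀‖ * ‖f x₀ - f y‖ := by ring
      _ = 2 * ‖g x₀‖ * ‖g x₀‖ * ‖f y - f x₀‖ := by rw [norm_sub_rev]
  have htend : Tendsto (fun y => ‖g y - g x₀‖) (𝓝[s] x₀) (𝓝 0) := by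
    refine squeeze_zero' (Eventually.of_forall fun y => norm_nonneg _) hfinal ?_
    simpa using hfc.const_mul (2 * ‖g x₀‖ * ‖g x₀‖)
  exact tendsto_iff_norm_sub_tendsto_zero.2 htend

/-- Differentiability of pointwise inverses in a normed algebra. -/
lemma aux_hasFDerivWithinAt_inverse {F : Type*} [NormedAddCommGroup F] [NormedSpace ℝ F]
    {R : Type*} [NormedRing R] [NormedAlgebra ℝ R] {f g : F → R} {s : Set F} {x₀ : F}
    {f' : F →L[ℝ] R} (hx₀ : x₀ ∈ s) (hf : HasFDerivWithinAt f f' s x₀)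
    (hg : ContinuousWithinAt g s x₀)
    (h1 : ∀ y ∈ s, g y * f y = 1) (h2 : ∀ y ∈ s, f y * g y = 1) :
    HasFDerivWithinAt g (-((ContinuousLinearMap.mul ℝ R (g x₀)).comp
      (((ContinuousLinearMap.mul ℝ R).flip (g x₀)).comp f'))) s x₀ := by
  have key : ∀ y ∈ s, g y - g x₀ = g y * (f x₀ - f y) * g x₀ := fun y hy =>
    aux_inv_sub_inv (h1 y hy) (h2 x₀ hx₀)
  have hO : (fun y => f y - f x₀) =O[𝓝[s] x₀] fun y => y - x₀ := hf.isBigO_sub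
  have hg0 : Tendsto (fun y => g y - g x₀) (𝓝[s] x₀) (𝓝 0) := by
    have hgt : Tendsto g (𝓝[s] x₀) (𝓝 (g x₀)) := hg
    simpa using hgt.sub_const (g x₀)
  have hu : (fun y => (g y - g x₀) * ((f y - f x₀) * g x₀)) =o[𝓝[s] x₀] fun y => y - x₀ := by
    have ha : (fun y => g y - g x₀) =o[𝓝[s] x₀] (fun _ => (1 : ℝ)) :=
      (isLittleO_one_iff ℝ).2 hg0
    have hb0 : (fun y => (f y - f x₀) * g x₀) =O[𝓝[s] x₀] fun y => f y - f x₀ := by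
      refine IsBigO.of_bound ‖g x₀‖ (Eventually.of_forall fun y => ?_)
      calc ‖(f y - f x₀) * g x₀‖ ≤ ‖f y - f x₀‖ * ‖g x₀‖ := norm_mul_le _ _
        _ = ‖g x₀‖ * ‖f y - f x₀‖ := by ring
    have hb : (fun y => (f y - f x₀) * g x₀) =O[𝓝[s] x₀] fun y => ‖y - x₀‖ :=
      (hb0.trans hO).norm_right
    have hmul := ha.mul_isBigO hb
    simp only [one_mul] at hmul
    exact hmul.of_norm_right
  have hw : (fun y => g x₀ * ((f y - f x₀ - f' (y - x₀)) * g x₀)) =o[𝓝[s] x₀]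
      fun y => y - x₀ := by
    have hfo : (fun y => f y - f x₀ - f' (y - x₀)) =o[𝓝[s] x₀] fun y => y - x₀ :=
      hf.isLittleO
    refine IsBigO.trans_isLittleO ?_ hfo
    refine IsBigO.of_bound (‖g x₀‖ * ‖g x₀‖) (Eventually.of_forall fun y => ?_)
    calc ‖g x₀ * ((f y - f x₀ - f' (y - x₀)) * g x₀)‖
        ≤ ‖g x₀‖ * ‖(f y - f x₀ - f' (y - x₀)) * g x₀‖ := norm_mul_le _ _
      _ ≤ ‖g x₀‖ * (‖f y - f x₀ - f' (y - x₀)‖ * ‖g x₀‖) := by gcongr; exact norm_mul_le _ _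
      _ = ‖g x₀‖ * ‖g x₀‖ * ‖f y - f x₀ - f' (y - x₀)‖ := by ring
  have heq : ∀ᶠ y in 𝓝[s] x₀,
      g y - g x₀ - (-((ContinuousLinearMap.mul ℝ R (g x₀)).comp
        (((ContinuousLinearMap.mul ℝ R).flip (g x₀)).comp f'))) (y - x₀) =
      -((g y - g x₀) * ((f y - f x₀) * g x₀)) +
        -(g x₀ * ((f y - f x₀ - f' (y - x₀)) * g x₀)) := by
    filter_upwards [self_mem_nhdsWithin] with y hy
    have hid := key y hy
    simp only [ContinuousLinearMap.neg_apply, ContinuousLinearMap.coe_comp',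
      Function.comp_apply, ContinuousLinearMap.flip_apply, ContinuousLinearMap.mul_apply']
    calc g y - g x₀ - -(g x₀ * (f' (y - x₀) * g x₀))
        = (g y - g x₀) + g x₀ * (f' (y - x₀) * g x₀) := by noncomm_ring
      _ = g y * (f x₀ - f y) * g x₀ + g x₀ * (f' (y - x₀) * g x₀) := by rw [← hid]
      _ = -(g y * ((f y - f x₀) * g x₀)) + g x₀ * (f' (y - x₀) * g x₀) := by noncomm_ring
      _ = -((g y - g x₀) * ((f y - f x₀) * g x₀)) +
            -(g x₀ * ((f y - f x₀ - f' (y - x₀)) * g x₀)) := by noncomm_ring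
  exact HasFDerivWithinAt.of_isLittleO
    (Filter.EventuallyEq.trans_isLittleO heq (hu.neg_left.add hw.neg_left))

/-- `C^n` regularity of pointwise inverses in a normed algebra, on a set with the
unique differentiability property. -/
lemma aux_contDiffOn_inverse {F : Type*} [NormedAddCommGroup F] [NormedSpace ℝ F]
    {R : Type*} [NormedRing R] [NormedAlgebra ℝ R] {f g : F → R} {s : Set F}
    (hs : UniqueDiffOn ℝ s)
    (h1 : ∀ y ∈ s, g y * f y = 1) (h2 : ∀ y ∈ s, f y * g y = 1) :
    ∀ n : ℕ, ContDiffOn ℝ n f s → ContDiffOn ℝ n g s := by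
  intro n
  induction n with
  | zero =>
    intro hf
    simp only [Nat.cast_zero, contDiffOn_zero] at hf ⊢
    exact aux_continuousOn_inverse hf h1 h2
  | succ n IH =>
    intro hf
    have hfd : DifferentiableOn ℝ f s := hf.differentiableOn (by simp)
    have hgc : ContinuousOn g s := aux_continuousOn_inverse hf.continuousOn h1 h2
    have hgd : ∀ y ∈ s, HasFDerivWithinAt g
        (-((ContinuousLinearMap.mul ℝ R (g y)).comp
          (((ContinuousLinearMap.mul ℝ R).flip (g y)).comp (fderivWithin ℝ f s y)))) s y :=
      fun y hy => aux_hasFDerivWithinAt_inverse hy (hfd y hy).hasFDerivWithinAt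
        (hgc y hy) h1 h2
    have hdiff : DifferentiableOn ℝ g s := fun y hy => (hgd y hy).differentiableWithinAt
    have hg_n : ContDiffOn ℝ n g s := IH (hf.of_le (by exact_mod_cast Nat.le_succ n))
    have hf' : ContDiffOn ℝ n (fderivWithin ℝ f s) s :=
      hf.fderivWithin hs (by exact_mod_cast le_rfl)
    have hD : ContDiffOn ℝ n (fun y => -((ContinuousLinearMap.mul ℝ R (g y)).comp
        (((ContinuousLinearMap.mul ℝ R).flip (g y)).comp (fderivWithin ℝ f s y)))) s := by
      have hmulg : ContDiffOn ℝ n (fun y => ContinuousLinearMap.mul ℝ R (g y)) s :=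
        (ContinuousLinearMap.mul ℝ R).contDiff.comp_contDiffOn hg_n
      have hmulg' : ContDiffOn ℝ n (fun y => (ContinuousLinearMap.mul ℝ R).flip (g y)) s :=
        ((ContinuousLinearMap.mul ℝ R).flip).contDiff.comp_contDiffOn hg_n
      exact (hmulg.clm_comp (hmulg'.clm_comp hf')).neg
    have hfd' : ContDiffOn ℝ n (fderivWithin ℝ g s) s :=
      hD.congr fun y hy => (hgd y hy).fderivWithin (hs y hy)
    have : ContDiffOn ℝ ((n : WithTop ℕ∞) + 1) g s :=
      contDiffOn_succ_of_fderivWithin hdiff (by simp) hfd'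
    exact_mod_cast this

end AuxInverse

section AuxManifold

open Set

variable [IsManifold I (⊤ : ℕ∞) M]

/-- If a family of continuous linear equivalences depends smoothly on the point of a
manifold, so does the family of their inverses. -/
lemma aux_contMDiff_symm {A : M → (E ≃L[ℝ] E)}
    (hA : ContMDiff I 𝓘(ℝ, E →L[ℝ] E) (⊤ : ℕ∞) fun x => (A x : E →L[ℝ] E)) :
    ContMDiff I 𝓘(ℝ, E →L[ℝ] E) (⊤ : ℕ∞) fun x => ((A x).symm : E →L[ℝ] E) := by
  have inv1 : ∀ x : M, ((A x).symm : E →L[ℝ] E) * (A x : E →L[ℝ] E) = 1 := fun x => by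
    ext v
    simp [ContinuousLinearMap.mul_apply]
  have inv2 : ∀ x : M, (A x : E →L[ℝ] E) * ((A x).symm : E →L[ℝ] E) = 1 := fun x => by
    ext v
    simp [ContinuousLinearMap.mul_apply]
  rw [contMDiff_iff] at hA ⊢
  obtain ⟨hAc, hAd⟩ := hA
  constructor
  · rw [← continuousOn_univ]
    exact aux_continuousOn_inverse hAc.continuousOn (fun y _ => inv1 y) (fun y _ => inv2 y)
  · intro x y
    have hd := hAd x y
    simp only [extChartAt_model_space_eq_id, PartialEquiv.refl_coe, PartialEquiv.refl_source,
      Set.preimage_univ, Set.inter_univ, Function.id_comp] at hd ⊢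
    rw [contDiffOn_infty] at hd ⊢
    intro n
    exact aux_contDiffOn_inverse (uniqueDiffOn_extChartAt_target x)
      (fun z _ => inv1 ((extChartAt I x).symm z))
      (fun z _ => inv2 ((extChartAt I x).symm z)) n (hd n)

/-- Applying a smooth mixing to a smooth tensor field yields a smooth tensor field. -/
lemma aux_smooth_applyMixing {m : ℕ} {B : Fin m → M → (E ≃L[ℝ] E)}
    (hB : SmoothMixing I M B) {h : M → Tens E m} (hh : SmoothTensField I h) :
    SmoothTensField I (applyMixing B h) := by
  have hrw : applyMixing B h = fun x =>
      (ContinuousMultilinearMap.compContinuousLinearMapContinuousMultilinear ℝ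
        (fun _ : Fin m => E) (fun _ : Fin m => E) (G := ℝ)
        (fun i => (B i x : E →L[ℝ] E))) (h x) := by
    funext x
    ext ξ
    simp [applyMixing, ContinuousMultilinearMap.compContinuousLinearMapContinuousMultilinear,
      ContinuousMultilinearMap.compContinuousLinearMapMultilinear,
      ContinuousMultilinearMap.compContinuousLinearMapL_apply]
  unfold SmoothTensField
  rw [hrw]
  refine ContMDiff.clm_apply ?_ hh
  have hpi : ContMDiff I 𝓘(ℝ, Fin m → (E →L[ℝ] E)) (⊤ : ℕ∞)
      (fun x => fun i => (B i x : E →L[ℝ] E)) :=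
    contMDiff_pi_space.2 fun i => hB i
  have hc : ContDiff ℝ (⊤ : ℕ∞)
      (⇑(ContinuousMultilinearMap.compContinuousLinearMapContinuousMultilinear ℝ
        (fun _ : Fin m => E) (fun _ : Fin m => E) (G := ℝ))) :=
    ContinuousMultilinearMap.contDiff _
  exact hc.comp_contMDiff hpi

end AuxManifold

section AuxMixing

/-- `A ∘ A⁻¹ = id` on tensor fields. -/
lemma aux_applyMixing_invMixing {m : ℕ} (A : Fin m → M → (E ≃L[ℝ] E)) (u : M → Tens E m) :
    applyMixing A (applyMixing (invMixing A) u) = u := by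
  funext x
  ext ξ
  simp [applyMixing, invMixing]

/-- `A⁻¹ ∘ A = id` on tensor fields. -/
lemma aux_invMixing_applyMixing {m : ℕ} (A : Fin m → M → (E ≃L[ℝ] E)) (u : M → Tens E m) :
    applyMixing (invMixing A) (applyMixing A u) = u := by
  funext x
  ext ξ
  simp [applyMixing, invMixing]

/-- `A⁻¹` acts injectively on tensor fields. -/
lemma aux_applyMixing_inv_inj {m : ℕ} (A : Fin m → M → (E ≃L[ℝ] E)) (p q : M → Tens E m)
    (hpq : applyMixing (invMixing A) p = applyMixing (invMixing A) q) : p = q := by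
  have h := congrArg (applyMixing A) hpq
  rwa [aux_applyMixing_invMixing, aux_applyMixing_invMixing] at h

/-- The solenoidal condition `σ̂_B h = σ̂_B (B⁻¹ u)` is equivalent to `σ(Bh) = σ(u)`. -/
lemma aux_sigmaHat_inv_eq_iff {m : ℕ} (B : Fin m → M → (E ≃L[ℝ] E)) (h u : M → Tens E m) :
    sigmaHat B h = sigmaHat B (applyMixing (invMixing B) u) ↔
      (fun x => symmTens (applyMixing B h x)) = fun x => symmTens (u x) := by
  unfold sigmaHat
  rw [aux_applyMixing_invMixing]
  exact ⟨fun hEq => aux_applyMixing_inv_inj B _ _ hEq, fun hEq => by rw [hEq]⟩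

end AuxMixing

theorem sinjectivity_transfer_between_mixings
    {E : Type*} [NormedAddCommGroup E] [NormedSpace ℝ E]
    {H : Type*} [TopologicalSpace H] (I : ModelWithCorners ℝ E H)
    (M : Type*) [TopologicalSpace M] [ChartedSpace H M] [IsManifold I (⊤ : ℕ∞) M]
    [CompactSpace M]
    (m : ℕ) (hm : 1 ≤ m)
    (Γ : CurveFamily I M) (nabla : (M → Tens E (m - 1)) → (M → Tens E m))
    (A Atil : Fin m → M → (E ≃L[ℝ] E))
    (hA : SmoothMixing I M A) (hAtil : SmoothMixing I M Atil)
    (hinj : SInjectiveMixing I M Γ nabla A) :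
    SInjectiveMixing I M Γ nabla Atil := by
  intro h hh
  set C : Fin m → M → (E ≃L[ℝ] E) := fun i x => (A i x).symm.trans (Atil i x) with hCdef
  have hCsm : SmoothMixing I M C := by
    intro i
    have hsymm := aux_contMDiff_symm (hA i)
    have hre : (fun x : M => ((C i x) : E →L[ℝ] E)) =
        fun x => ((Atil i x : E →L[ℝ] E)).comp (((A i x).symm : E →L[ℝ] E)) := by
      funext x
      ext v
      simp [C]
    rw [hre]
    exact (hAtil i).clm_comp hsymm
  set h' : M → Tens E m := applyMixing C h with hh'def
  have hh' : SmoothTensField I h' := aux_smooth_applyMixing hCsm hh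
  have hAh' : applyMixing A h' = applyMixing Atil h := by
    funext x
    ext ξ
    simp [h', C, applyMixing]
  rw [← hAh', hinj h' hh']
  refine exists_congr fun v => and_congr_right fun _ => and_congr_right fun _ =>
    and_congr_right fun _ => ?_
  rw [aux_sigmaHat_inv_eq_iff, aux_sigmaHat_inv_eq_iff, hAh']
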